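/- Let A be a finite-dimensional complete left-symmetric algebra over ℂ, and let H be a Cartan subalgebra of the commutator Lie algebra of A for which the root decomposition is canonical. Write A^χ = ⋂_{x∈H} maxGenEigenspace(L(x), χ(x)), and assume dim A^χ ≤ 1 for every χ : H → ℂ. Then for every e₀ ∈ A^0 one has R(e₀) = 0, i.e., x·e₀ = 0 for all x ∈ A. -/

import Mathlib

open TensorProduct in
lemma maxGen_bilinear {A : Type*} [AddCommGroup A] [Module ℂ A]
    (B : A →ₗ[ℂ] A →ₗ[ℂ] A) (f g h : Module.End ℂ A) (χ ψ : ℂ)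
    (hrel : ∀ a b, h (B a b) = B (f a) b + B a (g b))
    {a b : A} (ha : a ∈ f.maxGenEigenspace χ) (hb : b ∈ g.maxGenEigenspace ψ) :
    B a b ∈ h.maxGenEigenspace (χ + ψ) := by
  rw [Module.End.mem_maxGenEigenspace] at ha hb ⊢
  obtain ⟨k₁, hk₁⟩ := ha
  obtain ⟨k₂, hk₂⟩ := hb
  let G : A ⊗[ℂ] A →ₗ[ℂ] A := TensorProduct.lift B
  let F : Module.End ℂ A := h - (χ + ψ) • 1
  let f₁ : Module.End ℂ (A ⊗[ℂ] A) := (f - χ • 1).rTensor A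
  let f₂ : Module.End ℂ (A ⊗[ℂ] A) := (g - ψ • 1).lTensor A
  have hFG : F ∘ₗ G = G ∘ₗ (f₁ + f₂) := by
    refine TensorProduct.ext' fun a b => ?_
    simp only [F, G, f₁, f₂, LinearMap.comp_apply, LinearMap.add_apply, LinearMap.sub_apply,
      LinearMap.smul_apply, Module.End.one_apply, LinearMap.rTensor_tmul, LinearMap.lTensor_tmul,
      TensorProduct.lift.tmul, map_add, map_sub]
    rw [hrel a b]
    simp only [map_sub, map_smul, LinearMap.sub_apply, LinearMap.smul_apply, sub_tmul, tmul_sub,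
      tmul_smul, add_smul]
    abel
  have hf_comm : Commute f₁ f₂ := by
    refine TensorProduct.ext' fun a b => ?_
    simp only [f₁, f₂, Module.End.mul_apply, Module.End.mul_apply, LinearMap.rTensor_tmul,
      LinearMap.lTensor_tmul]
  have hf₁ : (f₁ ^ k₁) (a ⊗ₜ[ℂ] b) = 0 := by
    have e : f₁ ^ k₁ = LinearMap.rTensor A ((f - χ • 1) ^ k₁) := LinearMap.rTensor_pow _ _
    rw [e, LinearMap.rTensor_tmul, hk₁, zero_tmul]
  have hf₂ : (f₂ ^ k₂) (a ⊗ₜ[ℂ] b) = 0 := by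
    have e : f₂ ^ k₂ = LinearMap.lTensor A ((g - ψ • 1) ^ k₂) := LinearMap.lTensor_pow _ _
    rw [e, LinearMap.lTensor_tmul, hk₂, tmul_zero]
  have hk : ((f₁ + f₂) ^ (k₁ + k₂)) (a ⊗ₜ[ℂ] b) = 0 := by
    rw [hf_comm.add_pow']
    rw [LinearMap.coe_sum, Finset.sum_apply]
    apply Finset.sum_eq_zero
    rintro ⟨i, j⟩ hij
    rw [Finset.HasAntidiagonal.mem_antidiagonal] at hij
    suffices hz : (f₁ ^ i * f₂ ^ j) (a ⊗ₜ[ℂ] b) = 0 by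
      rw [LinearMap.smul_apply, hz, smul_zero]
    rcases le_or_gt k₁ i with hi | hi
    · rw [(hf_comm.pow_pow i j).eq, Module.End.mul_apply, Module.End.pow_map_zero_of_le hi hf₁,
        map_zero]
    · have hj : k₂ ≤ j := by omega
      rw [Module.End.mul_apply, Module.End.pow_map_zero_of_le hj hf₂, map_zero]
  refine ⟨k₁ + k₂, ?_⟩
  have : (F ^ (k₁ + k₂)) (G (a ⊗ₜ[ℂ] b)) = 0 := by
    rw [← LinearMap.comp_apply, Module.End.commute_pow_left_of_commute hFG,
      LinearMap.comp_apply, hk, map_zero]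
  simpa [F, G] using this

/-- In a finite-dimensional complete left-symmetric algebra over `ℂ` whose canonical
decomposition has all root spaces of dimension at most one, `R(e₀) = 0` for every
`e₀` in the zero root space. -/
theorem leftSymmetric_one_dimensional_R_zero (A : Type*)
    [LieRing A] [LieAlgebra ℂ A] [FiniteDimensional ℂ A]
    (mul : A →ₗ[ℂ] A →ₗ[ℂ] A)
    (hbr : ∀ x y : A, ⁅x, y⁆ = mul x y - mul y x)
    (hls : ∀ x y z : A,
      mul x (mul y z) - mul (mul x y) z = mul y (mul x z) - mul (mul y x) z)
    (hcomplete : ∀ x : A, IsNilpotent (mul.flip x))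
    (H : LieSubalgebra ℂ A) (hH : H.IsCartanSubalgebra)
    (hcanon : ∀ χ : H → ℂ,
      (⨅ x : H, Module.End.maxGenEigenspace (mul (x : A)) (χ x)) =
        ⨅ x : H, Module.End.maxGenEigenspace (mul (x : A) - mul.flip (x : A)) (χ x))
    (hdim : ∀ χ : H → ℂ,
      Module.finrank ℂ
        (⨅ x : H, Module.End.maxGenEigenspace (mul (x : A)) (χ x) : Submodule ℂ A) ≤ 1) :
    ∀ e₀ ∈ (⨅ x : H, Module.End.maxGenEigenspace (mul (x : A)) (0 : ℂ)),
      ∀ x : A, mul x e₀ = 0 := by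
  intro e₀ he₀ x₀
  set Brk : A →ₗ[ℂ] A →ₗ[ℂ] A := mul - mul.flip with hBrkdef
  have hBrkab : ∀ a b : A, Brk a b = mul a b - mul b a := fun a b => rfl
  have hBrk : ∀ a b : A, Brk a b = ⁅a, b⁆ := by
    intro a b
    rw [hbr a b, hBrkab]
  have hrel_bracket : ∀ y a b : A, Brk y (Brk a b) = Brk (Brk y a) b + Brk a (Brk y b) := by
    intro y a b
    simp only [hBrk]
    exact leibniz_lie y a b
  have hrel_mul : ∀ x a b : A, mul x (mul a b) = mul (Brk x a) b + mul a (mul x b) := by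
    intro x a b
    have h := hls x a b
    rw [hBrkab, map_sub, LinearMap.sub_apply]
    have h2 : mul x (mul a b) = mul (mul x a) b + (mul a (mul x b) - mul (mul a x) b) := by
      rw [← h]; abel
    rw [h2]; abel
  -- H elements lie in the zero generalized eigenspace of each ad
  haveI : LieRing.IsNilpotent H := hH.nilpotent
  have hHzero : ∀ x y : H, (x : A) ∈ Module.End.maxGenEigenspace (Brk (y : A)) 0 := by
    intro x y
    obtain ⟨n, hn⟩ := LieModule.isNilpotent_toEnd_of_isNilpotent ℂ H H y
    rw [Module.End.mem_maxGenEigenspace]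
    refine ⟨n, ?_⟩
    have key : ∀ (m : ℕ) (z : H),
        ((Brk (y : A)) ^ m) (z : A) = (((LieModule.toEnd ℂ H H y) ^ m) z : A) := by
      intro m
      induction m with
      | zero => intro z; simp
      | succ m ih =>
        intro z
        have hyz : ∀ w : H, (Brk (y : A)) (w : A) = ((⁅y, w⁆ : H) : A) := by
          intro w
          rw [hBrk]
          exact (LieSubalgebra.coe_bracket H y w).symm
        rw [pow_succ', Module.End.mul_apply, ih z, hyz, pow_succ', Module.End.mul_apply]
        congr 1
    have : ((Brk (y : A)) ^ n) (x : A) = 0 := by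
      rw [key n x, hn]; simp
    simpa using this
  -- mapsTo condition for simultaneous triangularization
  have hmaps : ∀ (x y : H) (φ : ℂ), Set.MapsTo (Brk (x : A))
      (Module.End.maxGenEigenspace (Brk (y : A)) φ)
      (Module.End.maxGenEigenspace (Brk (y : A)) φ) := by
    intro x y φ a ha
    have := maxGen_bilinear Brk (Brk (y : A)) (Brk (y : A)) (Brk (y : A)) 0 φ
      (hrel_bracket (y : A)) (hHzero x y) ha
    rwa [zero_add] at this
  have hsup : ⨆ χ : H → ℂ, ⨅ x : H, Module.End.maxGenEigenspace (Brk (x : A)) (χ x) = ⊤ :=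
    Module.End.iSup_iInf_maxGenEigenspace_eq_top_of_forall_mapsTo (fun x : H => Brk (x : A))
      (fun i j φ => hmaps i j φ) (fun i => Module.End.iSup_maxGenEigenspace_eq_top _)
  -- each simultaneous eigenspace is killed by right multiplication by e₀
  have hker : ∀ χ : H → ℂ,
      (⨅ x : H, Module.End.maxGenEigenspace (Brk (x : A)) (χ x)) ≤
        LinearMap.ker (mul.flip e₀) := by
    intro χ a ha
    have hBeq : (⨅ x : H, Module.End.maxGenEigenspace (Brk (x : A)) (χ x)) =
        ⨅ x : H, Module.End.maxGenEigenspace (mul (x : A) - mul.flip (x : A)) (χ x) := rfl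
    have haW : a ∈ (⨅ x : H, Module.End.maxGenEigenspace (mul (x : A)) (χ x)) := by
      rw [hcanon χ, ← hBeq]; exact ha
    have hmem : mul a e₀ ∈ (⨅ x : H, Module.End.maxGenEigenspace (mul (x : A)) (χ x)) := by
      rw [Submodule.mem_iInf]
      intro x
      have hax : a ∈ Module.End.maxGenEigenspace (Brk (x : A)) (χ x) := by
        rw [hBeq, Submodule.mem_iInf] at ha
        exact ha x
      have he0x : e₀ ∈ Module.End.maxGenEigenspace (mul (x : A)) 0 := by
        rw [Submodule.mem_iInf] at he₀
        exact he₀ x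
      have := maxGen_bilinear mul (Brk (x : A)) (mul (x : A)) (mul (x : A)) (χ x) 0
        (hrel_mul (x : A)) hax he0x
      rwa [add_zero] at this
    rw [LinearMap.mem_ker, LinearMap.flip_apply]
    by_cases h0 : a = 0
    · rw [h0, map_zero, LinearMap.zero_apply]
    · have hspan : Submodule.span ℂ {a} =
          (⨅ x : H, Module.End.maxGenEigenspace (mul (x : A)) (χ x)) := by
        apply Submodule.eq_of_le_of_finrank_le
        · rwa [Submodule.span_le, Set.singleton_subset_iff]
        · rw [finrank_span_singleton h0]
          exact hdim χ
      obtain ⟨c, hc⟩ := Submodule.mem_span_singleton.mp (hspan ▸ hmem)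
      have hca : mul a e₀ = c • a := hc.symm
      obtain ⟨n, hn⟩ := hcomplete e₀
      have hpow : ∀ m : ℕ, ((mul.flip e₀) ^ m) a = c ^ m • a := by
        intro m
        induction m with
        | zero => simp
        | succ m ih =>
          rw [pow_succ', Module.End.mul_apply, ih, map_smul, LinearMap.flip_apply, hca,
            smul_smul, pow_succ']
          ring_nf
      have hzero : c ^ n • a = 0 := by
        rw [← hpow n, hn, LinearMap.zero_apply]
      have hcn : c ^ n = 0 := by
        rcases smul_eq_zero.mp hzero with h | h
        · exact h
        · exact absurd h h0
      have hc0 : c = 0 := by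
        rcases Nat.eq_zero_or_pos n with rfl | hnpos
        · simp at hcn
        · exact pow_eq_zero_iff hnpos.ne' |>.mp hcn
      rw [hca, hc0, zero_smul]
  have htop : (⊤ : Submodule ℂ A) ≤ LinearMap.ker (mul.flip e₀) := by
    rw [← hsup]
    exact iSup_le hker
  have := htop (Submodule.mem_top : x₀ ∈ ⊤)
  rwa [LinearMap.mem_ker, LinearMap.flip_apply] at this
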